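/- Let S be a finite set, p ∈ [0,1], and let μ be the probability measure on subsets ω ⊆ S under which each element of S is included in ω independently with probability p. Let 𝒜 be a finite family of subsets of S, each of cardinality l ≥ 1, and let X(ω) = |{A ∈ 𝒜 : A ⊆ ω}|. For 1 ≤ i ≤ l, let Δ_i = {(A,B) ∈ 𝒜 × 𝒜 : |A ∩ B| = i}. Then Var(X) ≤ Σ_{i=1}^{l} p^{2l − i}·|Δ_i|. -/

import Mathlib

open Finset

lemma binom_one {S : Type*} [DecidableEq S] (p : ℝ) (s : Finset S) :
    ∑ u ∈ s.powerset, p ^ u.card * (1 - p) ^ (s.card - u.card) = 1 := by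
  have h := Finset.prod_add (fun _ : S => p) (fun _ => 1 - p) s
  simp only [add_sub_cancel, prod_const, one_pow] at h
  rw [show (∑ u ∈ s.powerset, p ^ u.card * (1 - p) ^ (s.card - u.card))
      = ∑ x ∈ s.powerset, p ^ x.card * (1 - p) ^ (s \ x).card from
    Finset.sum_congr rfl fun t ht => by rw [card_sdiff_of_subset (mem_powerset.mp ht)], ← h]

lemma key {S : Type*} [Fintype S] [DecidableEq S] (p : ℝ) (T : Finset S) :
    ∑ w ∈ univ.filter (fun w : Finset S => T ⊆ w),
      p ^ w.card * (1 - p) ^ (Fintype.card S - w.card) = p ^ T.card := by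
  have := binom_one p Tᶜ
  rw [Finset.sum_nbij' (i := fun w => w \ T) (j := fun u => T ∪ u)
      (t := Tᶜ.powerset) (g := fun u => p ^ T.card * (p ^ u.card * (1 - p) ^ (Tᶜ.card - u.card)))]
  · rw [← Finset.mul_sum, this, mul_one]
  · intro w hw
    simp only [mem_filter, mem_univ, true_and] at hw
    simp only [mem_powerset]
    intro x hx
    simp only [mem_sdiff] at hx
    simp [hx.2]
  · intro u hu
    simp only [mem_powerset] at hu
    simp only [mem_filter, mem_univ, true_and]
    exact subset_union_left
  · intro w hw
    simp only [mem_filter, mem_univ, true_and] at hw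
    exact Finset.union_sdiff_of_subset hw
  · intro u hu
    simp only [mem_powerset] at hu
    rw [Finset.union_sdiff_cancel_left]
    rw [Finset.disjoint_left]
    intro a ha hau
    exact (mem_compl.mp (hu hau)) ha
  · intro w hw
    simp only [mem_filter, mem_univ, true_and] at hw
    have hd : Disjoint T (w \ T) := disjoint_sdiff
    have h1 : w.card = T.card + (w \ T).card := by
      rw [← card_union_of_disjoint hd, Finset.union_sdiff_of_subset hw]
    rw [h1, pow_add, card_compl]
    ring_nf
    congr 2
    have := card_le_card hw
    have := card_le_univ w
    omega

/-- Variance bound for the sampling estimator: with `X(ω)` the number of patterns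
`A ∈ 𝒜` (each of cardinality `l ≥ 1`) contained in `ω`, under the product Bernoulli(p)
measure on subsets of `S`, `Var(X) ≤ Σ_{i=1}^{l} p^(2l-i) · |Δ_i|` where
`Δ_i = {(A,B) ∈ 𝒜 × 𝒜 : |A ∩ B| = i}`. -/
theorem sampling_estimator_variance_bound {S : Type*} [Fintype S] [DecidableEq S]
    (p : ℝ) (hp0 : 0 ≤ p) (hp1 : p ≤ 1) (l : ℕ) (hl : 1 ≤ l)
    (𝒜 : Finset (Finset S)) (hcard : ∀ A ∈ 𝒜, A.card = l) :
    (∑ w : Finset S, p ^ w.card * (1 - p) ^ (Fintype.card S - w.card) *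
        (((𝒜.filter (fun A => A ⊆ w)).card : ℝ)) ^ 2) -
      (∑ w : Finset S, p ^ w.card * (1 - p) ^ (Fintype.card S - w.card) *
        ((𝒜.filter (fun A => A ⊆ w)).card : ℝ)) ^ 2
    ≤ ∑ i ∈ Finset.Icc 1 l, p ^ (2 * l - i) *
        (((𝒜 ×ˢ 𝒜).filter (fun AB => (AB.1 ∩ AB.2).card = i)).card : ℝ) := by
  set n := Fintype.card S
  -- count as sum of indicators
  have hcnt : ∀ w : Finset S, ((𝒜.filter (fun A => A ⊆ w)).card : ℝ)
      = ∑ A ∈ 𝒜, (if A ⊆ w then (1:ℝ) else 0) := by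
    intro w
    rw [Finset.card_filter]
    push_cast
    simp
  -- E[X]
  have hEX : (∑ w : Finset S, p ^ w.card * (1 - p) ^ (n - w.card) * ((𝒜.filter (fun A => A ⊆ w)).card : ℝ))
      = ∑ A ∈ 𝒜, p ^ A.card := by
    simp_rw [hcnt, Finset.mul_sum]
    rw [Finset.sum_comm]
    apply Finset.sum_congr rfl
    intro A hA
    rw [← key p A]
    rw [Finset.sum_filter]
    apply Finset.sum_congr rfl
    intro w hw
    by_cases h : A ⊆ w <;> simp [h, n]
  -- E[X^2]
  have hEX2 : (∑ w : Finset S, p ^ w.card * (1 - p) ^ (n - w.card) * ((𝒜.filter (fun A => A ⊆ w)).card : ℝ) ^ 2)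
      = ∑ A ∈ 𝒜, ∑ B ∈ 𝒜, p ^ (A ∪ B).card := by
    have step : ∀ w : Finset S, ((𝒜.filter (fun A => A ⊆ w)).card : ℝ) ^ 2
        = ∑ A ∈ 𝒜, ∑ B ∈ 𝒜, (if A ∪ B ⊆ w then (1:ℝ) else 0) := by
      intro w
      rw [hcnt, sq, Finset.sum_mul_sum]
      apply Finset.sum_congr rfl; intro A _
      apply Finset.sum_congr rfl; intro B _
      by_cases hA : A ⊆ w <;> by_cases hB : B ⊆ w <;>
        simp [hA, hB, Finset.union_subset_iff]
    simp_rw [step, Finset.mul_sum]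
    rw [Finset.sum_comm]
    apply Finset.sum_congr rfl
    intro A hA
    rw [Finset.sum_comm]
    apply Finset.sum_congr rfl
    intro B hB
    rw [← key p (A ∪ B), Finset.sum_filter]
    apply Finset.sum_congr rfl
    intro w hw
    by_cases h : A ∪ B ⊆ w <;> simp [h, n]
  rw [hEX2, hEX]
  have hEXval : ∑ A ∈ 𝒜, p ^ A.card = (𝒜.card : ℝ) * p ^ l := by
    rw [Finset.sum_congr rfl (fun A hA => by rw [hcard A hA]), Finset.sum_const,
      nsmul_eq_mul]
  rw [hEXval]
  have expand : ((𝒜.card : ℝ) * p ^ l) ^ 2 = ∑ A ∈ 𝒜, ∑ B ∈ 𝒜, p ^ l * p ^ l := by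
    simp [Finset.sum_const, mul_pow, sq]; ring
  rw [expand, ← Finset.sum_sub_distrib]
  simp_rw [← Finset.sum_sub_distrib]
  rw [← Finset.sum_product' (s := 𝒜) (t := 𝒜)
    (f := fun A B => p ^ (A ∪ B).card - p ^ l * p ^ l)]
  have hmap : ∀ AB ∈ 𝒜 ×ˢ 𝒜, (AB.1 ∩ AB.2).card ∈ Finset.Icc 0 l := by
    rintro ⟨A, B⟩ hAB
    rw [Finset.mem_product] at hAB
    simp only [Finset.mem_Icc]
    exact ⟨Nat.zero_le _, (hcard A hAB.1) ▸ Finset.card_le_card inter_subset_left⟩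
  rw [← Finset.sum_fiberwise_of_maps_to hmap
    (fun AB => p ^ (AB.1 ∪ AB.2).card - p ^ l * p ^ l)]
  have hunion : ∀ i, ∀ AB ∈ (𝒜 ×ˢ 𝒜).filter (fun AB => (AB.1 ∩ AB.2).card = i),
      (AB.1 ∪ AB.2).card = 2 * l - i ∧ i ≤ l := by
    intro i AB hAB
    rw [Finset.mem_filter, Finset.mem_product] at hAB
    obtain ⟨⟨h1, h2⟩, h3⟩ := hAB
    have := Finset.card_union_add_card_inter AB.1 AB.2
    rw [hcard _ h1, hcard _ h2, h3] at this
    have hle : i ≤ l := by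
      rw [← h3, ← hcard _ h1]; exact Finset.card_le_card inter_subset_left
    omega
  have hsplit : Finset.Icc 0 l = insert 0 (Finset.Icc 1 l) := by
    ext x; simp [Finset.mem_Icc]; omega
  rw [hsplit, Finset.sum_insert (by simp)]
  have hzero : ∑ AB ∈ (𝒜 ×ˢ 𝒜).filter (fun AB => (AB.1 ∩ AB.2).card = 0),
      (p ^ (AB.1 ∪ AB.2).card - p ^ l * p ^ l) = 0 := by
    apply Finset.sum_eq_zero
    intro AB hAB
    rw [(hunion 0 AB hAB).1, ← pow_add]
    have : 2 * l - 0 = l + l := by omega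
    rw [this]
    ring
  rw [hzero, zero_add]
  apply Finset.sum_le_sum
  intro i hi
  calc ∑ AB ∈ (𝒜 ×ˢ 𝒜).filter (fun AB => (AB.1 ∩ AB.2).card = i),
        (p ^ (AB.1 ∪ AB.2).card - p ^ l * p ^ l)
      ≤ ∑ _AB ∈ (𝒜 ×ˢ 𝒜).filter (fun AB => (AB.1 ∩ AB.2).card = i), p ^ (2 * l - i) := by
        apply Finset.sum_le_sum
        intro AB hAB
        rw [(hunion i AB hAB).1]
        have : 0 ≤ p ^ l * p ^ l := mul_nonneg (pow_nonneg hp0 l) (pow_nonneg hp0 l)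
        linarith
    _ = p ^ (2 * l - i) *
        (((𝒜 ×ˢ 𝒜).filter (fun AB => (AB.1 ∩ AB.2).card = i)).card : ℝ) := by
        rw [Finset.sum_const, nsmul_eq_mul, mul_comm]
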